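/- Let 0 ≤ a < b be real numbers and let Δ be a map on signals such that for every signal x in L²[0,∞), the image Δx is again a signal in L²[0,∞), and which satisfies the two-sided slope inequality: for all τ ∈ ℝ and all signals x in L²[0,∞), with y := Δx, |∫₀^∞ (x − b⁻¹y)(t+τ)·(−a·x + y)(t) dt| ≤ ∫₀^∞ (x − b⁻¹y)(t)·(−a·x + y)(t) dt. Then for every θ ∈ [0,1], the map x ↦ θ·(Δx) + (1−θ)·a·x also satisfies the same two-sided slope inequality (with y replaced by θ·(Δx) + (1−θ)·a·x). -/

import Mathlib

open MeasureTheory Set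

/-- A signal in L²[0,∞): square integrable over ℝ and vanishing on (−∞,0). -/
def IsSignal (x : ℝ → ℝ) : Prop :=
  MemLp x 2 volume ∧ ∀ t < (0:ℝ), x t = 0

/-- The two-sided [a,b]-slope shift inequality for a map `Δ` on signals. -/
def AbsSlopeIneq (a b : ℝ) (Δ : (ℝ → ℝ) → (ℝ → ℝ)) : Prop :=
  ∀ (τ : ℝ) (x : ℝ → ℝ), IsSignal x →
    |∫ t in Ici (0:ℝ), (x (t + τ) - b⁻¹ * Δ x (t + τ)) * (-a * x t + Δ x t)|
      ≤ ∫ t in Ici (0:ℝ), (x t - b⁻¹ * Δ x t) * (-a * x t + Δ x t)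

/-- Translation of an `L²` function is `L²`. -/
lemma memLp_shift {f : ℝ → ℝ} (hf : MemLp f 2 volume) (τ : ℝ) :
    MemLp (fun t => f (t + τ)) 2 volume :=
  hf.comp_measurePreserving (measurePreserving_add_right volume τ)

/-- The product of two `L²` functions is integrable. -/
lemma integrable_mul_of_memLp2 {f g : ℝ → ℝ} {μ : Measure ℝ}
    (hf : MemLp f 2 μ) (hg : MemLp g 2 μ) :
    Integrable (fun t => f t * g t) μ := by
  have : MemLp (f • g) 1 μ := hg.smul hf
  exact memLp_one_iff_integrable.mp this

/-- Autocorrelation bound: for a causal `L²` function `v`,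
`|∫_{t≥0} v(t+τ) v(t)| ≤ ∫_{t≥0} v(t)²`. -/
lemma autocorr_bound {v : ℝ → ℝ} (hv : MemLp v 2 volume)
    (hv0 : ∀ t < (0:ℝ), v t = 0) (τ : ℝ) :
    |∫ t in Ici (0:ℝ), v (t + τ) * v t| ≤ ∫ t in Ici (0:ℝ), v t * v t := by
  have hvτ : MemLp (fun t => v (t + τ)) 2 volume := memLp_shift hv τ
  have hint : Integrable (fun t => v (t + τ) * v t) (volume.restrict (Ici 0)) :=
    integrable_mul_of_memLp2 (hvτ.restrict _) (hv.restrict _)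
  have hsq : Integrable (fun t => v t * v t) volume := integrable_mul_of_memLp2 hv hv
  have hsqτ : Integrable (fun t => v (t + τ) * v (t + τ)) volume :=
    integrable_mul_of_memLp2 hvτ hvτ
  -- the shifted square integral over [0,∞) is at most the full square integral
  have hA : (∫ t in Ici (0:ℝ), v (t + τ) * v (t + τ)) ≤ ∫ t in Ici (0:ℝ), v t * v t := by
    have h1 : (∫ t in Ici (0:ℝ), v (t + τ) * v (t + τ)) ≤ ∫ t, v (t + τ) * v (t + τ) :=
      setIntegral_le_integral hsqτ (ae_of_all _ fun t => mul_self_nonneg _)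
    have h2 : (∫ t, v (t + τ) * v (t + τ)) = ∫ t, v t * v t :=
      integral_add_right_eq_self (fun t => v t * v t) τ
    have h3 : (∫ t, v t * v t) = ∫ t in Ici (0:ℝ), v t * v t := by
      rw [← intervalIntegral.integral_Iio_add_Ici (b := (0:ℝ)) hsq.integrableOn hsq.integrableOn]
      have : (∫ t in Iio (0:ℝ), v t * v t) = 0 := by
        apply setIntegral_eq_zero_of_ae_eq_zero
        filter_upwards with t ht
        rw [hv0 t (mem_Iio.mp ht)]; ring
      rw [this, zero_add]
    linarith
  have habs : |∫ t in Ici (0:ℝ), v (t + τ) * v t|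
      ≤ ∫ t in Ici (0:ℝ), |v (t + τ) * v t| := by
    simpa only [Real.norm_eq_abs] using
      norm_integral_le_integral_norm (μ := volume.restrict (Ici 0)) (fun t => v (t + τ) * v t)
  have hptwise : (∫ t in Ici (0:ℝ), |v (t + τ) * v t|)
      ≤ ∫ t in Ici (0:ℝ), (v (t + τ) * v (t + τ) + v t * v t) / 2 := by
    apply integral_mono hint.abs
    · exact (hsqτ.integrableOn.add hsq.integrableOn).div_const 2
    · intro t
      have := abs_mul (v (t + τ)) (v t)
      nlinarith [sq_nonneg (|v (t + τ)| - |v t|), abs_nonneg (v (t + τ)), abs_nonneg (v t),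
        sq_abs (v (t + τ)), sq_abs (v t)]
  have hsplit : (∫ t in Ici (0:ℝ), (v (t + τ) * v (t + τ) + v t * v t) / 2)
      = ((∫ t in Ici (0:ℝ), v (t + τ) * v (t + τ)) + ∫ t in Ici (0:ℝ), v t * v t) / 2 := by
    rw [integral_div, integral_add hsqτ.integrableOn hsq.integrableOn]
  linarith

theorem abs_slope_ineq_homotopy
    (a b : ℝ) (ha : 0 ≤ a) (hab : a < b)
    (Δ : (ℝ → ℝ) → (ℝ → ℝ))
    (hΔ : ∀ x, IsSignal x → IsSignal (Δ x))
    (hslope : AbsSlopeIneq a b Δ) :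
    ∀ θ : ℝ, θ ∈ Icc (0:ℝ) 1 →
      AbsSlopeIneq a b (fun x => fun t => θ * Δ x t + (1 - θ) * a * x t) := by
  intro θ hθ τ x hx
  obtain ⟨hθ0, hθ1⟩ := hθ
  have hb : 0 < b := lt_of_le_of_lt ha hab
  obtain ⟨hy, hy0⟩ := hΔ x hx
  obtain ⟨hx2, hx0⟩ := hx
  set y : ℝ → ℝ := Δ x with hy_def
  set u : ℝ → ℝ := fun t => x t - b⁻¹ * y t with hu_def
  set v : ℝ → ℝ := fun t => -a * x t + y t with hv_def
  have hu2 : MemLp u 2 volume := hx2.sub (hy.const_mul _)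
  have hv2 : MemLp v 2 volume := (hx2.const_mul (-a)).add hy
  have hv0 : ∀ t < (0:ℝ), v t = 0 := by
    intro t ht; simp [hv_def, hx0 t ht, hy0 t ht]
  -- decomposition of the integrals
  have key : ∀ σ : ℝ,
      (∫ t in Ici (0:ℝ),
        (x (t + σ) - b⁻¹ * (θ * y (t + σ) + (1 - θ) * a * x (t + σ)))
          * (-a * x t + (θ * y t + (1 - θ) * a * x t)))
      = θ * (∫ t in Ici (0:ℝ), u (t + σ) * v t)
        + (θ * (1 - θ) * b⁻¹) * ∫ t in Ici (0:ℝ), v (t + σ) * v t := by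
    intro σ
    have h1 : Integrable (fun t => u (t + σ) * v t) (volume.restrict (Ici 0)) :=
      integrable_mul_of_memLp2 ((memLp_shift hu2 σ).restrict _) (hv2.restrict _)
    have h2 : Integrable (fun t => v (t + σ) * v t) (volume.restrict (Ici 0)) :=
      integrable_mul_of_memLp2 ((memLp_shift hv2 σ).restrict _) (hv2.restrict _)
    have heq : (∫ t in Ici (0:ℝ),
        (x (t + σ) - b⁻¹ * (θ * y (t + σ) + (1 - θ) * a * x (t + σ)))
          * (-a * x t + (θ * y t + (1 - θ) * a * x t)))
        = ∫ t in Ici (0:ℝ),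
            (θ * (u (t + σ) * v t) + (θ * (1 - θ) * b⁻¹) * (v (t + σ) * v t)) := by
      apply integral_congr_ae
      filter_upwards with t
      simp only [hu_def, hv_def]
      ring
    rw [heq, integral_add (h1.const_mul θ) (h2.const_mul _), integral_const_mul, integral_const_mul]
  have hI : |∫ t in Ici (0:ℝ), u (t + τ) * v t| ≤ ∫ t in Ici (0:ℝ), u t * v t := by
    simpa [hu_def, hv_def, hy_def] using hslope τ x ⟨hx2, hx0⟩
  have hK := autocorr_bound hv2 hv0 τ
  have hc : 0 ≤ θ * (1 - θ) * b⁻¹ :=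
    mul_nonneg (mul_nonneg hθ0 (by linarith)) (inv_nonneg.mpr hb.le)
  have key0 : (∫ t in Ici (0:ℝ),
      (x t - b⁻¹ * (θ * y t + (1 - θ) * a * x t)) * (-a * x t + (θ * y t + (1 - θ) * a * x t)))
      = θ * (∫ t in Ici (0:ℝ), u t * v t)
        + (θ * (1 - θ) * b⁻¹) * ∫ t in Ici (0:ℝ), v t * v t := by
    simpa using key 0
  simp only []
  rw [key τ, key0]
  calc |θ * (∫ t in Ici (0:ℝ), u (t + τ) * v t)
        + (θ * (1 - θ) * b⁻¹) * ∫ t in Ici (0:ℝ), v (t + τ) * v t|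
      ≤ |θ * (∫ t in Ici (0:ℝ), u (t + τ) * v t)|
        + |(θ * (1 - θ) * b⁻¹) * ∫ t in Ici (0:ℝ), v (t + τ) * v t| := abs_add_le _ _
    _ = θ * |∫ t in Ici (0:ℝ), u (t + τ) * v t|
        + (θ * (1 - θ) * b⁻¹) * |∫ t in Ici (0:ℝ), v (t + τ) * v t| := by
        rw [abs_mul, abs_mul, abs_of_nonneg hθ0, abs_of_nonneg hc]
    _ ≤ θ * (∫ t in Ici (0:ℝ), u t * v t)
        + (θ * (1 - θ) * b⁻¹) * ∫ t in Ici (0:ℝ), v t * v t := by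
        gcongr
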